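/- First-order conditions of the dual: if strictly positive vectors α ∈ ℝ^n and α̃ ∈ ℝ^ñ maximize the dual function d over all strictly positive vectors, then α_i ∑_j k_ij α̃_j = p_i for all i and α̃_j ∑_i k_ij α_i = p̃_j for all j, where k_ij = e^{-λ c_ij}. -/

import Mathlib

open Finset

/-- The dual function of the Sinkhorn problem. -/
noncomputable def dual {n m : ℕ} (lam : ℝ) (c : Fin n → Fin m → ℝ)
    (p : Fin n → ℝ) (pt : Fin m → ℝ) (α : Fin n → ℝ) (αt : Fin m → ℝ) : ℝ :=
  1 / lam + (1 / lam) * ∑ i, p i * Real.log (α i)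
    + (1 / lam) * ∑ j, pt j * Real.log (αt j)
    - (1 / lam) * ∑ i, ∑ j, α i * Real.exp (-lam * c i j) * αt j

lemma key_lemma (p q : ℝ) (h : ∀ x : ℝ, 0 < x → p * Real.log x ≤ q * (x - 1)) : q = p := by
  have h1 : IsLocalMin (fun x : ℝ => q * (x - 1) - p * Real.log x) 1 := by
    have hx : ∀ᶠ x : ℝ in nhds 1, 0 < x := eventually_gt_nhds one_pos
    refine hx.mono fun x hx => ?_
    have := h x hx
    simp only [Real.log_one, mul_zero, sub_self, sub_zero]
    linarith
  have h2 : HasDerivAt (fun x : ℝ => q * (x - 1) - p * Real.log x) (q - p) 1 := by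
    have ha : HasDerivAt (fun x : ℝ => q * (x - 1)) (q * 1) 1 :=
      ((hasDerivAt_id 1).sub_const 1).const_mul q
    have hb : HasDerivAt (fun x : ℝ => p * Real.log x) (p * 1⁻¹) 1 :=
      (Real.hasDerivAt_log one_ne_zero).const_mul p
    have h3 := ha.sub hb; simp only [mul_one, inv_one] at h3; exact h3
  have := h1.hasDerivAt_eq_zero h2
  linarith

lemma perturb (p S a : ℝ) (ha : 0 < a)
    (h : ∀ x : ℝ, 0 < x → p * Real.log (a * x) - a * x * S ≤ p * Real.log a - a * S) :
    a * S = p := by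
  apply key_lemma
  intro x hx
  have h2 := h x hx
  rw [Real.log_mul (ne_of_gt ha) (ne_of_gt hx)] at h2
  nlinarith [h2]

theorem dual_maximizer_fixed_point {n m : ℕ} (hn : 1 ≤ n) (hm : 1 ≤ m)
    (p : Fin n → ℝ) (pt : Fin m → ℝ)
    (hp0 : ∀ i, 0 ≤ p i) (hpt0 : ∀ j, 0 ≤ pt j)
    (hp1 : ∑ i, p i = 1) (hpt1 : ∑ j, pt j = 1)
    (c : Fin n → Fin m → ℝ) (hc : ∀ i j, 0 ≤ c i j)
    (lam : ℝ) (hlam : 0 < lam)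
    (α : Fin n → ℝ) (αt : Fin m → ℝ)
    (hα : ∀ i, 0 < α i) (hαt : ∀ j, 0 < αt j)
    (hmax : ∀ (β : Fin n → ℝ) (βt : Fin m → ℝ), (∀ i, 0 < β i) → (∀ j, 0 < βt j) →
      dual lam c p pt β βt ≤ dual lam c p pt α αt) :
    (∀ i, α i * ∑ j, Real.exp (-lam * c i j) * αt j = p i) ∧
      (∀ j, αt j * ∑ i, Real.exp (-lam * c i j) * α i = pt j) := by
  constructor
  · intro i
    set S : ℝ := ∑ j, Real.exp (-lam * c i j) * αt j with hS
    apply perturb _ _ _ (hα i)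
    intro x hx
    set β : Fin n → ℝ := Function.update α i (α i * x) with hβdef
    have hβ : ∀ k, 0 < β k := by
      intro k
      by_cases hk : k = i
      · subst hk; simp only [β, Function.update_self]; exact mul_pos (hα k) hx
      · simp [β, Function.update_of_ne hk]; exact hα k
    have hle := hmax β αt hβ hαt
    have hrowsum : ∀ a : ℝ, ∑ j, a * Real.exp (-lam * c i j) * αt j = a * S := by
      intro a
      rw [hS, Finset.mul_sum]
      exact Finset.sum_congr rfl (fun j _ => by ring)
    have h1 : ∑ k, p k * Real.log (β k) - ∑ k, p k * Real.log (α k)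
        = p i * Real.log (α i * x) - p i * Real.log (α i) := by
      rw [← Finset.sum_sub_distrib, Finset.sum_eq_single i]
      · simp [β, Function.update_self]
      · intro b _ hb; simp [β, Function.update_of_ne hb]
      · simp
    have h2 : (∑ k, ∑ j, β k * Real.exp (-lam * c k j) * αt j)
        - ∑ k, ∑ j, α k * Real.exp (-lam * c k j) * αt j
        = α i * x * S - α i * S := by
      rw [← Finset.sum_sub_distrib, Finset.sum_eq_single i]
      · simp only [β, Function.update_self]
        rw [hrowsum (α i * x), hrowsum (α i)]
      · intro b _ hb; simp [β, Function.update_of_ne hb]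
      · simp
    have hdiff : dual lam c p pt β αt - dual lam c p pt α αt
        = (1 / lam) * ((p i * Real.log (α i * x) - α i * x * S)
            - (p i * Real.log (α i) - α i * S)) := by
      unfold dual
      have e1 : ∑ k, p k * Real.log (β k)
          = ∑ k, p k * Real.log (α k) + (p i * Real.log (α i * x) - p i * Real.log (α i)) := by
        linarith [h1]
      have e2 : (∑ k, ∑ j, β k * Real.exp (-lam * c k j) * αt j)
          = (∑ k, ∑ j, α k * Real.exp (-lam * c k j) * αt j) + (α i * x * S - α i * S) := by
        linarith [h2]
      rw [e1, e2]; ring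
    have h0 : (1 / lam) * ((p i * Real.log (α i * x) - α i * x * S)
        - (p i * Real.log (α i) - α i * S)) ≤ 0 := by linarith
    have hfin : (p i * Real.log (α i * x) - α i * x * S)
        - (p i * Real.log (α i) - α i * S) ≤ 0 := by
      by_contra hcon
      push_neg at hcon
      have := mul_pos (by positivity : (0:ℝ) < 1 / lam) hcon
      linarith
    linarith
  · intro j
    set S : ℝ := ∑ i, Real.exp (-lam * c i j) * α i with hS
    apply perturb _ _ _ (hαt j)
    intro x hx
    set β : Fin m → ℝ := Function.update αt j (αt j * x) with hβdef
    have hβ : ∀ k, 0 < β k := by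
      intro k
      by_cases hk : k = j
      · subst hk; simp only [β, Function.update_self]; exact mul_pos (hαt k) hx
      · simp [β, Function.update_of_ne hk]; exact hαt k
    have hle := hmax α β hα hβ
    have hcolsum : ∀ a : ℝ, ∑ i, Real.exp (-lam * c i j) * α i * a = a * S := by
      intro a
      rw [hS, Finset.mul_sum]
      exact Finset.sum_congr rfl (fun i _ => by ring)
    have h1 : ∑ k, pt k * Real.log (β k) - ∑ k, pt k * Real.log (αt k)
        = pt j * Real.log (αt j * x) - pt j * Real.log (αt j) := by
      rw [← Finset.sum_sub_distrib, Finset.sum_eq_single j]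
      · simp [β, Function.update_self]
      · intro b _ hb; simp [β, Function.update_of_ne hb]
      · simp
    have h2 : (∑ i, ∑ k, α i * Real.exp (-lam * c i k) * β k)
        - ∑ i, ∑ k, α i * Real.exp (-lam * c i k) * αt k
        = αt j * x * S - αt j * S := by
      rw [← Finset.sum_sub_distrib]
      have : ∀ i : Fin n, (∑ k, α i * Real.exp (-lam * c i k) * β k)
          - ∑ k, α i * Real.exp (-lam * c i k) * αt k
          = α i * Real.exp (-lam * c i j) * (αt j * x - αt j) := by
        intro i
        rw [← Finset.sum_sub_distrib, Finset.sum_eq_single j]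
        · simp only [β, Function.update_self]; ring
        · intro b _ hb; simp [β, Function.update_of_ne hb]
        · simp
      rw [Finset.sum_congr rfl (fun i _ => this i)]
      rw [show (αt j * x * S - αt j * S) = (αt j * x - αt j) * S by ring, hS, Finset.mul_sum]
      exact Finset.sum_congr rfl (fun i _ => by ring)
    have hdiff : dual lam c p pt α β - dual lam c p pt α αt
        = (1 / lam) * ((pt j * Real.log (αt j * x) - αt j * x * S)
            - (pt j * Real.log (αt j) - αt j * S)) := by
      unfold dual
      have e1 : ∑ k, pt k * Real.log (β k)
          = ∑ k, pt k * Real.log (αt k) + (pt j * Real.log (αt j * x) - pt j * Real.log (αt j)) := by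
        linarith [h1]
      have e2 : (∑ i, ∑ k, α i * Real.exp (-lam * c i k) * β k)
          = (∑ i, ∑ k, α i * Real.exp (-lam * c i k) * αt k) + (αt j * x * S - αt j * S) := by
        linarith [h2]
      rw [e1, e2]; ring
    have h0 : (1 / lam) * ((pt j * Real.log (αt j * x) - αt j * x * S)
        - (pt j * Real.log (αt j) - αt j * S)) ≤ 0 := by linarith
    have hfin : (pt j * Real.log (αt j * x) - αt j * x * S)
        - (pt j * Real.log (αt j) - αt j * S) ≤ 0 := by
      by_contra hcon
      push_neg at hcon
      have := mul_pos (by positivity : (0:ℝ) < 1 / lam) hcon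
      linarith
    linarith
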